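/- If m₁, …, m₅ are integers, each at least 2, satisfying Σᵢ (mᵢ - 1)/mᵢ ≤ 3, then after sorting in nondecreasing order the tuple (m₁,…,m₅) is one of: (2,2,3,3,3), (2,2,2,4,4), (2,2,2,3,n) with 3 ≤ n ≤ 6, or (2,2,2,2,n) with n ≥ 2. -/
import Mathlib

lemma inv_mono' (x k : ℤ) (hk : 0 < k) (h : k ≤ x) : (1:ℚ)/(x:ℚ) ≤ 1/(k:ℚ) := by
  have hk' : (0:ℚ) < (k:ℚ) := by exact_mod_cast hk
  exact one_div_le_one_div_of_le hk' (by exact_mod_cast h)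

/-- Classification of five integers `m i ≥ 2` with `Σ (m i - 1)/(m i) ≤ 3`:
after sorting, the tuple is (2,2,3,3,3), (2,2,2,4,4), (2,2,2,3,n) with 3 ≤ n ≤ 6,
or (2,2,2,2,n) with n ≥ 2. -/
theorem stmt0 (m : Fin 5 → ℤ) (h2 : ∀ i, 2 ≤ m i)
    (hsum : ∑ i, ((m i : ℚ) - 1) / (m i) ≤ 3) :
    ∃ σ : Equiv.Perm (Fin 5), Monotone (m ∘ σ) ∧
      (m ∘ σ = ![2, 2, 3, 3, 3] ∨
       m ∘ σ = ![2, 2, 2, 4, 4] ∨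
       (∃ n : ℤ, 3 ≤ n ∧ n ≤ 6 ∧ m ∘ σ = ![2, 2, 2, 3, n]) ∨
       (∃ n : ℤ, 2 ≤ n ∧ m ∘ σ = ![2, 2, 2, 2, n])) := by
  refine ⟨Tuple.sort m, Tuple.monotone_sort m, ?_⟩
  set σ := Tuple.sort m with hσ
  have hmono : Monotone (m ∘ σ) := Tuple.monotone_sort m
  set f : Fin 5 → ℤ := m ∘ σ with hf
  have h2' : ∀ i, 2 ≤ f i := fun i => h2 _
  have hsum' : ((f 0:ℚ)-1)/(f 0) + ((f 1:ℚ)-1)/(f 1) + ((f 2:ℚ)-1)/(f 2)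
      + ((f 3:ℚ)-1)/(f 3) + ((f 4:ℚ)-1)/(f 4) ≤ 3 := by
    have hc := Equiv.sum_comp σ (fun i => ((m i : ℚ) - 1) / (m i))
    rw [Fin.sum_univ_five] at hc
    rw [← hc] at hsum
    exact hsum
  have key : ∀ i, ((f i:ℚ)-1)/(f i) = 1 - 1/(f i) := by
    intro i
    have : (f i : ℚ) ≠ 0 := by
      have := h2' i
      intro h; exact absurd (by exact_mod_cast h : f i = 0) (by omega)
    field_simp
  rw [key 0, key 1, key 2, key 3, key 4] at hsum'
  have hinv : 2 ≤ 1/(f 0:ℚ) + 1/(f 1:ℚ) + 1/(f 2:ℚ) + 1/(f 3:ℚ) + 1/(f 4:ℚ) := by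
    linarith
  have h01 : f 0 ≤ f 1 := hmono (show (0:Fin 5) ≤ 1 by decide)
  have h12 : f 1 ≤ f 2 := hmono (show (1:Fin 5) ≤ 2 by decide)
  have h23 : f 2 ≤ f 3 := hmono (show (2:Fin 5) ≤ 3 by decide)
  have h34 : f 3 ≤ f 4 := hmono (show (3:Fin 5) ≤ 4 by decide)
  -- f 0 = 2
  have ha : f 0 = 2 := by
    by_contra h
    have h3 : 3 ≤ f 0 := by have := h2' 0; omega
    have b0 := inv_mono' (f 0) 3 (by norm_num) h3
    have b1 := inv_mono' (f 1) 3 (by norm_num) (by omega)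
    have b2 := inv_mono' (f 2) 3 (by norm_num) (by omega)
    have b3 := inv_mono' (f 3) 3 (by norm_num) (by omega)
    have b4 := inv_mono' (f 4) 3 (by norm_num) (by omega)
    push_cast at b0 b1 b2 b3 b4
    linarith
  have hb : f 1 = 2 := by
    by_contra h
    have h3 : 3 ≤ f 1 := by have := h2' 1; omega
    have b0 := inv_mono' (f 0) 2 (by norm_num) (h2' 0)
    have b1 := inv_mono' (f 1) 3 (by norm_num) h3
    have b2 := inv_mono' (f 2) 3 (by norm_num) (by omega)
    have b3 := inv_mono' (f 3) 3 (by norm_num) (by omega)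
    have b4 := inv_mono' (f 4) 3 (by norm_num) (by omega)
    push_cast at b0 b1 b2 b3 b4
    linarith
  have b0 := inv_mono' (f 0) 2 (by norm_num) (h2' 0)
  have b1 := inv_mono' (f 1) 2 (by norm_num) (h2' 1)
  push_cast at b0 b1
  have hcle : f 2 ≤ 3 := by
    by_contra h
    have b2 := inv_mono' (f 2) 4 (by norm_num) (by omega)
    have b3 := inv_mono' (f 3) 4 (by norm_num) (by omega)
    have b4 := inv_mono' (f 4) 4 (by norm_num) (by omega)
    push_cast at b2 b3 b4
    linarith
  have hceq : f 2 = 2 ∨ f 2 = 3 := by have := h2' 2; omega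
  have heq : ∀ (v : Fin 5 → ℤ), f 0 = v 0 → f 1 = v 1 → f 2 = v 2 → f 3 = v 3 →
      f 4 = v 4 → f = v := by
    intro v e0 e1 e2 e3 e4
    funext i
    fin_cases i <;> assumption
  rcases hceq with hc | hc
  · -- f 2 = 2
    have b2 := inv_mono' (f 2) 2 (by norm_num) (h2' 2)
    push_cast at b2
    have hdle : f 3 ≤ 4 := by
      by_contra h
      have b3 := inv_mono' (f 3) 5 (by norm_num) (by omega)
      have b4 := inv_mono' (f 4) 5 (by norm_num) (by omega)
      push_cast at b3 b4
      linarith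
    have hdeq : f 3 = 2 ∨ f 3 = 3 ∨ f 3 = 4 := by have := h2' 3; omega
    rcases hdeq with hd | hd | hd
    · exact Or.inr (Or.inr (Or.inr ⟨f 4, by omega,
        heq ![2,2,2,2,f 4] ha hb hc hd rfl⟩))
    · -- f 3 = 3 : e ≤ 6
      have hele : f 4 ≤ 6 := by
        by_contra h
        have b3 := inv_mono' (f 3) 3 (by norm_num) (by omega)
        have b4 := inv_mono' (f 4) 7 (by norm_num) (by omega)
        push_cast at b3 b4
        linarith
      exact Or.inr (Or.inr (Or.inl ⟨f 4, by omega, hele,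
        heq ![2,2,2,3,f 4] ha hb hc hd rfl⟩))
    · -- f 3 = 4 : e = 4
      have hele : f 4 ≤ 4 := by
        by_contra h
        have b3 := inv_mono' (f 3) 4 (by norm_num) (by omega)
        have b4 := inv_mono' (f 4) 5 (by norm_num) (by omega)
        push_cast at b3 b4
        linarith
      have he : f 4 = 4 := by omega
      exact Or.inr (Or.inl (heq ![2,2,2,4,4] ha hb hc hd he))
  · -- f 2 = 3
    have b2 := inv_mono' (f 2) 3 (by norm_num) (by omega)
    push_cast at b2
    have hdle : f 3 ≤ 3 := by
      by_contra h
      have b3 := inv_mono' (f 3) 4 (by norm_num) (by omega)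
      have b4 := inv_mono' (f 4) 4 (by norm_num) (by omega)
      push_cast at b3 b4
      linarith
    have hd : f 3 = 3 := by omega
    have hele : f 4 ≤ 3 := by
      by_contra h
      have b3 := inv_mono' (f 3) 3 (by norm_num) (by omega)
      have b4 := inv_mono' (f 4) 4 (by norm_num) (by omega)
      push_cast at b3 b4
      linarith
    have he : f 4 = 3 := by omega
    exact Or.inl (heq ![2,2,3,3,3] ha hb hc hd he)
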